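/- Let a1, …, a5 > 0, b1 = (a1 + a2)/(1 + a4·a5), b3 = a5/(1 + a4·a5), and θ1, θ2, θ3, θ4 defined by θ1 = a3/(1 + a3·a4·b1), θ2 = (a3·b1 + b3)/(1 + a3·a4·b1), θ3 = a3·b3/(1 + a3·a4·b1), θ4 = a3·a4/(1 + a3·a4·b1). Suppose V, I ∈ ℝ satisfy the IV equation I = a1 − a2·(exp(a3·(V + a4·I)) − 1) − a5·(V + a4·I). Then a2 = [θ1²·I + θ1·θ3·V + θ1²·(θ1·θ2 − θ3)/(θ3·θ4 − θ1²)] · exp(((θ3·θ4 − θ1²)/(θ1 − θ2·θ4))·(V + (θ4/θ1)·I)) / (θ3·θ4 − θ1²). -/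

import Mathlib

theorem a2_recovery_from_theta
    (a1 a2 a3 a4 a5 b1 b3 θ1 θ2 θ3 θ4 : ℝ)
    (ha1 : 0 < a1) (ha2 : 0 < a2) (ha3 : 0 < a3) (ha4 : 0 < a4) (ha5 : 0 < a5)
    (hb1 : b1 = (a1 + a2) / (1 + a4 * a5))
    (hb3 : b3 = a5 / (1 + a4 * a5))
    (hθ1 : θ1 = a3 / (1 + a3 * a4 * b1))
    (hθ2 : θ2 = (a3 * b1 + b3) / (1 + a3 * a4 * b1))
    (hθ3 : θ3 = a3 * b3 / (1 + a3 * a4 * b1))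
    (hθ4 : θ4 = a3 * a4 / (1 + a3 * a4 * b1))
    (V I : ℝ)
    (hiv : I = a1 - a2 * (Real.exp (a3 * (V + a4 * I)) - 1) - a5 * (V + a4 * I)) :
    a2 = (θ1 ^ 2 * I + θ1 * θ3 * V
            + θ1 ^ 2 * (θ1 * θ2 - θ3) / (θ3 * θ4 - θ1 ^ 2))
          * Real.exp ((θ3 * θ4 - θ1 ^ 2) / (θ1 - θ2 * θ4) * (V + θ4 / θ1 * I))
          / (θ3 * θ4 - θ1 ^ 2) := by
  have hD : (0:ℝ) < 1 + a4 * a5 := by positivity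
  have hDne : (1 + a4 * a5) ≠ 0 := hD.ne'
  have hb1pos : 0 < b1 := by rw [hb1]; positivity
  have hb3pos : 0 < b3 := by rw [hb3]; positivity
  have hE : (0:ℝ) < 1 + a3 * a4 * b1 := by positivity
  have hEne : (1 + a3 * a4 * b1) ≠ 0 := hE.ne'
  have h13 : 1 - a4 * b3 = 1 / (1 + a4 * a5) := by
    rw [hb3]; field_simp; ring
  have h13pos : 0 < 1 - a4 * b3 := by rw [h13]; positivity
  have h13ne : 1 - a4 * b3 ≠ 0 := h13pos.ne'
  have h34 : θ3 * θ4 - θ1 ^ 2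
      = -(a3 ^ 2 * (1 - a4 * b3) / (1 + a3 * a4 * b1) ^ 2) := by
    rw [hθ1, hθ3, hθ4]; field_simp; ring
  have h12 : θ1 - θ2 * θ4
      = a3 * (1 - a4 * b3) / (1 + a3 * a4 * b1) ^ 2 := by
    rw [hθ1, hθ2, hθ4]; field_simp; ring
  have hratio : (θ3 * θ4 - θ1 ^ 2) / (θ1 - θ2 * θ4) = -a3 := by
    rw [h34, h12]; field_simp
  have h41 : θ4 / θ1 = a4 := by
    rw [hθ4, hθ1]; field_simp
  have hcoef : θ1 ^ 2 * I + θ1 * θ3 * V + θ1 ^ 2 * (θ1 * θ2 - θ3) / (θ3 * θ4 - θ1 ^ 2)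
      = a3 ^ 2 / (1 + a3 * a4 * b1) ^ 2 * (I + b3 * V - b1) := by
    rw [h34, hθ1, hθ2, hθ3]; field_simp; ring
  set X := Real.exp (a3 * (V + a4 * I)) with hX
  have hXpos : 0 < X := Real.exp_pos _
  have hXne : X ≠ 0 := hXpos.ne'
  have hXi : Real.exp (-a3 * (V + a4 * I)) = X⁻¹ := by
    rw [show -a3 * (V + a4 * I) = -(a3 * (V + a4 * I)) by ring, Real.exp_neg]
  have key : a2 * X = a1 + a2 - a5 * (V + a4 * I) - I := by
    linear_combination hiv
  have key2 : (b1 - b3 * V - I) / (1 - a4 * b3)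
      = a1 + a2 - a5 * (V + a4 * I) - I := by
    rw [hb1, hb3,
      show (1:ℝ) - a4 * (a5 / (1 + a4 * a5)) = 1 / (1 + a4 * a5) by field_simp; ring]
    rw [div_div_eq_mul_div, div_one]
    field_simp
    ring
  have hfrac : (a3 ^ 2 / (1 + a3 * a4 * b1) ^ 2 * (I + b3 * V - b1))
      / (-(a3 ^ 2 * (1 - a4 * b3) / (1 + a3 * a4 * b1) ^ 2))
      = (b1 - b3 * V - I) / (1 - a4 * b3) := by
    rw [div_eq_div_iff (neg_ne_zero.mpr (by positivity)) h13ne]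
    ring
  rw [h41, hratio, hcoef, h34, hXi, mul_div_right_comm, hfrac, key2, ← key]
  field_simp
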